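/- arXiv:2311.09119 — 3 statements merged into one kernel-verified Lean document; each statement's English description precedes it below -/
import Mathlib

section
/- Continuity estimate for the p-Laplace flux (Barrett–Liu): for every p ∈ (1, ∞) and every δ ≥ 0 there exists a constant C₁ > 0 such that for all τ₁, τ₂ ∈ ℝ^d with τ₁ ≠ τ₂, |A(τ₁) − A(τ₂)| ≤ C₁ |τ₁ − τ₂|^{1−δ} (|τ₁| + |τ₂|)^{p−2+δ}. -/
/-- The p-Laplace flux `A(τ) = |τ|^{p-2} τ` (with `A(0) = 0`). -/
noncomputable def pFlux (d : ℕ) (p : ℝ) (τ : EuclideanSpace ℝ (Fin d)) :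
    EuclideanSpace ℝ (Fin d) := ‖τ‖ ^ (p - 2) • τ

lemma one_sub_rpow_le_aux {t s : ℝ} (ht0 : 0 < t) (ht1 : t ≤ 1) (hs : 0 ≤ s) :
    1 - t ^ s ≤ max 1 s * (1 - t) := by
  rcases le_or_gt 1 s with h | h
  · rw [max_eq_right h]
    have hb : 1 + s * (t - 1) ≤ (1 + (t - 1)) ^ s :=
      one_add_mul_self_le_rpow_one_add (by linarith) h
    have h1 : (1 : ℝ) + (t - 1) = t := by ring
    rw [h1] at hb
    nlinarith
  · rw [max_eq_left h.le]
    have : t ^ (1 : ℝ) ≤ t ^ s := Real.rpow_le_rpow_of_exponent_ge ht0 ht1 h.le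
    rw [Real.rpow_one] at this
    linarith

lemma rpow_sub_rpow_le_aux {x y s : ℝ} (hy : 0 < y) (hxy : y ≤ x) (hs : 0 ≤ s) :
    x ^ s - y ^ s ≤ max 1 s * x ^ (s - 1) * (x - y) := by
  have hx : 0 < x := lt_of_lt_of_le hy hxy
  have ht0 : 0 < y / x := div_pos hy hx
  have ht1 : y / x ≤ 1 := (div_le_one hx).2 hxy
  have h := one_sub_rpow_le_aux ht0 ht1 hs
  have hdiv : (y / x) ^ s = y ^ s / x ^ s := Real.div_rpow hy.le hx.le s
  rw [hdiv] at h
  have hxs : (0 : ℝ) < x ^ s := Real.rpow_pos_of_pos hx s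
  have key := mul_le_mul_of_nonneg_left h hxs.le
  have hxne : x ≠ 0 := hx.ne'
  have hL : x ^ s * (1 - y ^ s / x ^ s) = x ^ s - y ^ s := by
    field_simp
  have hsub : x ^ (s - 1) = x ^ s / x := by
    rw [Real.rpow_sub hx, Real.rpow_one]
  have hR : x ^ s * (max 1 s * (1 - y / x)) = max 1 s * x ^ (s - 1) * (x - y) := by
    rw [hsub]; field_simp
  rw [hL, hR] at key
  exact key

lemma pFlux_norm (d : ℕ) (p : ℝ) (τ : EuclideanSpace ℝ (Fin d)) :
    ‖pFlux d p τ‖ = ‖τ‖ ^ (p - 2) * ‖τ‖ := by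
  rw [pFlux, norm_smul, Real.norm_eq_abs,
    abs_of_nonneg (Real.rpow_nonneg (norm_nonneg _) _)]

set_option maxHeartbeats 1000000 in
lemma main_est (d : ℕ) (p : ℝ) (hp : 1 < p) (a b : EuclideanSpace ℝ (Fin d))
    (hne : a ≠ b) (hba : ‖b‖ ≤ ‖a‖) :
    ‖pFlux d p a - pFlux d p b‖ ≤
      ((6 + |p - 2|) * 2 ^ |p - 2|) * ‖a - b‖ * (‖a‖ + ‖b‖) ^ (p - 2) := by
  set q : ℝ := p - 2 with hq
  have hq1 : -1 < q := by rw [hq]; linarith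
  have hD : (0 : ℝ) < ‖a - b‖ := by
    rw [norm_pos_iff]; exact sub_ne_zero.mpr hne
  have ha0 : (0 : ℝ) < ‖a‖ := by
    by_contra h
    push_neg at h
    have ha : ‖a‖ = 0 := le_antisymm h (norm_nonneg a)
    have hb : ‖b‖ = 0 := le_antisymm (by linarith) (norm_nonneg b)
    rw [norm_eq_zero] at ha hb
    exact hne (by rw [ha, hb])
  have hS : (0 : ℝ) < ‖a‖ + ‖b‖ := by positivity
  have hS2 : ‖a‖ + ‖b‖ ≤ 2 * ‖a‖ := by linarith
  have h2q : (1 : ℝ) ≤ 2 ^ |q| := Real.one_le_rpow one_le_two (abs_nonneg q)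
  have h2qpos : (0 : ℝ) < 2 ^ |q| := Real.rpow_pos_of_pos two_pos _
  have hSq : (0 : ℝ) < (‖a‖ + ‖b‖) ^ q := Real.rpow_pos_of_pos hS q
  have hN1q : ‖a‖ ^ q ≤ 2 ^ |q| * (‖a‖ + ‖b‖) ^ q := by
    rcases le_or_gt 0 q with h | h
    · have h1 : ‖a‖ ^ q ≤ (‖a‖ + ‖b‖) ^ q :=
        Real.rpow_le_rpow (norm_nonneg a) (by linarith [norm_nonneg b]) h
      nlinarith
    · have h1 : (2 * ‖a‖) ^ q ≤ (‖a‖ + ‖b‖) ^ q :=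
        Real.rpow_le_rpow_of_nonpos hS hS2 h.le
      rw [Real.mul_rpow (by norm_num) ha0.le] at h1
      have h2 : |q| = -q := abs_of_neg h
      have h3 : (2 : ℝ) ^ |q| * 2 ^ q = 1 := by
        rw [h2, ← Real.rpow_add two_pos]; simp
      nlinarith [Real.rpow_pos_of_pos ha0 q, Real.rpow_pos_of_pos two_pos q]
  rcases le_or_gt ‖a‖ (2 * ‖a - b‖) with hcase | hcase
  · -- far apart case
    have htri : ‖pFlux d p a - pFlux d p b‖ ≤ ‖a‖ ^ q * ‖a‖ + ‖b‖ ^ q * ‖b‖ := by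
      calc ‖pFlux d p a - pFlux d p b‖ ≤ ‖pFlux d p a‖ + ‖pFlux d p b‖ := norm_sub_le _ _
        _ = ‖a‖ ^ q * ‖a‖ + ‖b‖ ^ q * ‖b‖ := by rw [pFlux_norm, pFlux_norm]
    have hmono : ‖b‖ ^ q * ‖b‖ ≤ ‖a‖ ^ q * ‖a‖ := by
      rcases eq_or_lt_of_le (norm_nonneg b) with h | h
      · rw [← h, mul_zero]
        positivity
      · have := Real.rpow_le_rpow (norm_nonneg b) hba (by linarith : (0:ℝ) ≤ q + 1)
        rwa [Real.rpow_add_one h.ne', Real.rpow_add_one ha0.ne'] at this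
    have h1 : ‖a‖ ^ q * ‖a‖ ≤ (2 ^ |q| * (‖a‖ + ‖b‖) ^ q) * (2 * ‖a - b‖) :=
      mul_le_mul hN1q hcase ha0.le (by positivity)
    nlinarith [abs_nonneg q, mul_pos hD hSq, mul_pos (mul_pos hD hSq) h2qpos]
  · -- close case
    have hb0 : (0 : ℝ) < ‖b‖ := by
      have h : ‖a‖ ≤ ‖a - b‖ + ‖b‖ := by
        calc ‖a‖ = ‖(a - b) + b‖ := by rw [sub_add_cancel]
          _ ≤ ‖a - b‖ + ‖b‖ := norm_add_le _ _
      linarith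
    have hNN : ‖a‖ - ‖b‖ ≤ ‖a - b‖ := by
      have := norm_sub_norm_le a b
      linarith [le_abs_self (‖a‖ - ‖b‖)]
    have hdecomp : pFlux d p a - pFlux d p b
        = ‖a‖ ^ q • (a - b) + (‖a‖ ^ q - ‖b‖ ^ q) • b := by
      simp only [pFlux, smul_sub, sub_smul, ← hq]
      abel
    have hnorm : ‖pFlux d p a - pFlux d p b‖
        ≤ ‖a‖ ^ q * ‖a - b‖ + |‖a‖ ^ q - ‖b‖ ^ q| * ‖b‖ := by
      rw [hdecomp]
      calc ‖‖a‖ ^ q • (a - b) + (‖a‖ ^ q - ‖b‖ ^ q) • b‖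
          ≤ ‖‖a‖ ^ q • (a - b)‖ + ‖(‖a‖ ^ q - ‖b‖ ^ q) • b‖ := norm_add_le _ _
        _ = ‖a‖ ^ q * ‖a - b‖ + |‖a‖ ^ q - ‖b‖ ^ q| * ‖b‖ := by
            rw [norm_smul, norm_smul, Real.norm_eq_abs, Real.norm_eq_abs,
              abs_of_nonneg (Real.rpow_nonneg (norm_nonneg a) q)]
    have hterm2 : |‖a‖ ^ q - ‖b‖ ^ q| * ‖b‖
        ≤ (1 + |q|) * 2 ^ |q| * ‖a - b‖ * (‖a‖ + ‖b‖) ^ q := by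
      rcases le_or_gt 0 q with hq0 | hq0
      · -- q ≥ 0
        have hle : ‖b‖ ^ q ≤ ‖a‖ ^ q := Real.rpow_le_rpow (norm_nonneg b) hba hq0
        rw [abs_of_nonneg (by linarith)]
        have h1 : ‖a‖ ^ q - ‖b‖ ^ q ≤ max 1 q * ‖a‖ ^ (q - 1) * (‖a‖ - ‖b‖) :=
          rpow_sub_rpow_le_aux hb0 hba hq0
        have h2 : max 1 q * ‖a‖ ^ (q - 1) * (‖a‖ - ‖b‖)
            ≤ max 1 q * ‖a‖ ^ (q - 1) * ‖a - b‖ := by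
          have hmn : (0:ℝ) ≤ max 1 q * ‖a‖ ^ (q - 1) := by positivity
          exact mul_le_mul_of_nonneg_left hNN hmn
        have h3 : (‖a‖ ^ q - ‖b‖ ^ q) * ‖b‖
            ≤ (max 1 q * ‖a‖ ^ (q - 1) * ‖a - b‖) * ‖a‖ :=
          mul_le_mul (le_trans h1 h2) hba (norm_nonneg b) (by positivity)
        have h4 : ‖a‖ ^ (q - 1) * ‖a‖ = ‖a‖ ^ q := by
          rw [← Real.rpow_add_one ha0.ne']; ring_nf
        have h5 : (max 1 q * ‖a‖ ^ (q - 1) * ‖a - b‖) * ‖a‖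
            = max 1 q * ‖a - b‖ * (‖a‖ ^ (q - 1) * ‖a‖) := by ring
        rw [h5, h4] at h3
        have h6 : max 1 q ≤ 1 + |q| := by
          rcases max_cases 1 q with ⟨h, _⟩ | ⟨h, _⟩ <;> rw [h]
          · linarith [abs_nonneg q]
          · linarith [le_abs_self q]
        calc (‖a‖ ^ q - ‖b‖ ^ q) * ‖b‖ ≤ max 1 q * ‖a - b‖ * ‖a‖ ^ q := h3
          _ ≤ (1 + |q|) * ‖a - b‖ * (2 ^ |q| * (‖a‖ + ‖b‖) ^ q) := by
              apply mul_le_mul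
              · exact mul_le_mul_of_nonneg_right h6 hD.le
              · exact hN1q
              · positivity
              · positivity
          _ = (1 + |q|) * 2 ^ |q| * ‖a - b‖ * (‖a‖ + ‖b‖) ^ q := by ring
      · -- q < 0
        have hs0 : (0:ℝ) < -q := by linarith
        have hs1 : -q ≤ 1 := by linarith
        have hle : ‖a‖ ^ q ≤ ‖b‖ ^ q := Real.rpow_le_rpow_of_nonpos hb0 hba hq0.le
        rw [abs_of_nonpos (by linarith), neg_sub]
        have hA : (0:ℝ) < ‖a‖ ^ (-q) := Real.rpow_pos_of_pos ha0 _
        have hB : (0:ℝ) < ‖b‖ ^ (-q) := Real.rpow_pos_of_pos hb0 _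
        have h1 : ‖a‖ ^ (-q) - ‖b‖ ^ (-q) ≤ ‖a‖ ^ (-q - 1) * ‖a - b‖ := by
          have h := rpow_sub_rpow_le_aux hb0 hba hs0.le
          rw [max_eq_left hs1] at h
          have h2 : ‖a‖ ^ (-q - 1) * (‖a‖ - ‖b‖) ≤ ‖a‖ ^ (-q - 1) * ‖a - b‖ :=
            mul_le_mul_of_nonneg_left hNN (by positivity)
          calc ‖a‖ ^ (-q) - ‖b‖ ^ (-q) ≤ 1 * ‖a‖ ^ (-q - 1) * (‖a‖ - ‖b‖) := h
            _ = ‖a‖ ^ (-q - 1) * (‖a‖ - ‖b‖) := by ring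
            _ ≤ ‖a‖ ^ (-q - 1) * ‖a - b‖ := h2
        have h2 : ‖a‖ ^ (-q - 1) ≤ ‖b‖ ^ (-q - 1) :=
          Real.rpow_le_rpow_of_nonpos hb0 hba (by linarith)
        have h3 : ‖b‖ ^ (-q - 1) * ‖b‖ = ‖b‖ ^ (-q) := by
          rw [← Real.rpow_add_one hb0.ne']; ring_nf
        have h4 : (‖a‖ ^ (-q) - ‖b‖ ^ (-q)) * ‖b‖ ≤ ‖a - b‖ * ‖b‖ ^ (-q) := by
          calc (‖a‖ ^ (-q) - ‖b‖ ^ (-q)) * ‖b‖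
              ≤ (‖a‖ ^ (-q - 1) * ‖a - b‖) * ‖b‖ :=
                mul_le_mul_of_nonneg_right h1 (norm_nonneg b)
            _ ≤ (‖b‖ ^ (-q - 1) * ‖a - b‖) * ‖b‖ := by
                apply mul_le_mul_of_nonneg_right _ (norm_nonneg b)
                exact mul_le_mul_of_nonneg_right h2 hD.le
            _ = ‖a - b‖ * (‖b‖ ^ (-q - 1) * ‖b‖) := by ring
            _ = ‖a - b‖ * ‖b‖ ^ (-q) := by rw [h3]
        have hqa : ‖a‖ ^ q = (‖a‖ ^ (-q))⁻¹ := by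
          rw [← Real.rpow_neg ha0.le, neg_neg]
        have hqb : ‖b‖ ^ q = (‖b‖ ^ (-q))⁻¹ := by
          rw [← Real.rpow_neg hb0.le, neg_neg]
        have hkey : (‖b‖ ^ q - ‖a‖ ^ q) * ‖b‖ ≤ ‖a - b‖ * ‖a‖ ^ q := by
          rw [hqa, hqb]
          rw [inv_sub_inv hB.ne' hA.ne']
          rw [div_mul_eq_mul_div, ← div_eq_mul_inv,
            div_le_div_iff₀ (by positivity) hA]
          nlinarith [mul_le_mul_of_nonneg_right h4 hA.le]
        calc (‖b‖ ^ q - ‖a‖ ^ q) * ‖b‖ ≤ ‖a - b‖ * ‖a‖ ^ q := hkey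
          _ ≤ ‖a - b‖ * (2 ^ |q| * (‖a‖ + ‖b‖) ^ q) :=
              mul_le_mul_of_nonneg_left hN1q hD.le
          _ = 1 * (2 ^ |q| * ‖a - b‖ * (‖a‖ + ‖b‖) ^ q) := by ring
          _ ≤ (1 + |q|) * (2 ^ |q| * ‖a - b‖ * (‖a‖ + ‖b‖) ^ q) := by
              have hnn : (0:ℝ) ≤ 2 ^ |q| * ‖a - b‖ * (‖a‖ + ‖b‖) ^ q := by positivity
              have hle1 : (1:ℝ) ≤ 1 + |q| := by linarith [abs_nonneg q]
              exact mul_le_mul_of_nonneg_right hle1 hnn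
          _ = (1 + |q|) * 2 ^ |q| * ‖a - b‖ * (‖a‖ + ‖b‖) ^ q := by ring
    have hterm1 : ‖a‖ ^ q * ‖a - b‖ ≤ 2 ^ |q| * (‖a‖ + ‖b‖) ^ q * ‖a - b‖ :=
      mul_le_mul_of_nonneg_right hN1q hD.le
    have hfinal : 2 ^ |q| * (‖a‖ + ‖b‖) ^ q * ‖a - b‖
        + (1 + |q|) * 2 ^ |q| * ‖a - b‖ * (‖a‖ + ‖b‖) ^ q
        ≤ (6 + |q|) * 2 ^ |q| * ‖a - b‖ * (‖a‖ + ‖b‖) ^ q := by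
      have hnn : (0:ℝ) ≤ 2 ^ |q| * ‖a - b‖ * (‖a‖ + ‖b‖) ^ q := by positivity
      have hle1 : (2:ℝ) + |q| ≤ 6 + |q| := by linarith
      calc 2 ^ |q| * (‖a‖ + ‖b‖) ^ q * ‖a - b‖
          + (1 + |q|) * 2 ^ |q| * ‖a - b‖ * (‖a‖ + ‖b‖) ^ q
          = (2 + |q|) * (2 ^ |q| * ‖a - b‖ * (‖a‖ + ‖b‖) ^ q) := by ring
        _ ≤ (6 + |q|) * (2 ^ |q| * ‖a - b‖ * (‖a‖ + ‖b‖) ^ q) :=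
            mul_le_mul_of_nonneg_right hle1 hnn
        _ = (6 + |q|) * 2 ^ |q| * ‖a - b‖ * (‖a‖ + ‖b‖) ^ q := by ring
    linarith

/-- Continuity estimate for the p-Laplace flux (Barrett–Liu): for every
`p ∈ (1, ∞)` and `δ ≥ 0` there is `C₁ > 0` such that for all `τ₁ ≠ τ₂` in `ℝ^d`,
`|A(τ₁) − A(τ₂)| ≤ C₁ |τ₁ − τ₂|^{1−δ} (|τ₁| + |τ₂|)^{p−2+δ}`. -/
theorem stmt_4 (d : ℕ) (hd : 1 ≤ d) (p : ℝ) (hp : 1 < p) (δ : ℝ) (hδ : 0 ≤ δ) :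
    ∃ C₁ > (0 : ℝ), ∀ τ₁ τ₂ : EuclideanSpace ℝ (Fin d), τ₁ ≠ τ₂ →
      ‖pFlux d p τ₁ - pFlux d p τ₂‖ ≤
        C₁ * ‖τ₁ - τ₂‖ ^ (1 - δ) * (‖τ₁‖ + ‖τ₂‖) ^ (p - 2 + δ) := by
  refine ⟨(6 + |p - 2|) * 2 ^ |p - 2|, by positivity, ?_⟩
  intro τ₁ τ₂ hne
  have hD : (0 : ℝ) < ‖τ₁ - τ₂‖ := by
    rw [norm_pos_iff]; exact sub_ne_zero.mpr hne
  have hS : (0 : ℝ) < ‖τ₁‖ + ‖τ₂‖ := by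
    by_contra h
    push_neg at h
    have h1 : ‖τ₁‖ = 0 := le_antisymm (by linarith [norm_nonneg τ₂]) (norm_nonneg τ₁)
    have h2 : ‖τ₂‖ = 0 := le_antisymm (by linarith [norm_nonneg τ₁]) (norm_nonneg τ₂)
    rw [norm_eq_zero] at h1 h2
    exact hne (by rw [h1, h2])
  have hDS : ‖τ₁ - τ₂‖ ≤ ‖τ₁‖ + ‖τ₂‖ := norm_sub_le _ _
  have hCpos : (0:ℝ) < (6 + |p - 2|) * 2 ^ |p - 2| := by positivity
  have hmain : ‖pFlux d p τ₁ - pFlux d p τ₂‖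
      ≤ (6 + |p - 2|) * 2 ^ |p - 2| * ‖τ₁ - τ₂‖ * (‖τ₁‖ + ‖τ₂‖) ^ (p - 2) := by
    rcases le_total ‖τ₂‖ ‖τ₁‖ with h | h
    · exact main_est d p hp τ₁ τ₂ hne h
    · have hmm := main_est d p hp τ₂ τ₁ (Ne.symm hne) h
      rw [norm_sub_rev (pFlux d p τ₂), norm_sub_rev τ₂, add_comm ‖τ₂‖ ‖τ₁‖] at hmm
      exact hmm
  -- reduction to δ = 0
  have e1 : ‖τ₁ - τ₂‖ ^ ((1:ℝ) - δ) = ‖τ₁ - τ₂‖ * ‖τ₁ - τ₂‖ ^ (-δ) := by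
    rw [show (1:ℝ) - δ = 1 + (-δ) by ring, Real.rpow_add hD, Real.rpow_one]
  have e2 : (‖τ₁‖ + ‖τ₂‖) ^ (p - 2 + δ) = (‖τ₁‖ + ‖τ₂‖) ^ (p - 2) * (‖τ₁‖ + ‖τ₂‖) ^ δ :=
    Real.rpow_add hS _ _
  have hδ2 : ‖τ₁ - τ₂‖ ^ δ ≤ (‖τ₁‖ + ‖τ₂‖) ^ δ := Real.rpow_le_rpow hD.le hDS hδ
  have hδpos : (0:ℝ) < ‖τ₁ - τ₂‖ ^ δ := Real.rpow_pos_of_pos hD δ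
  have e3 : (1:ℝ) ≤ ‖τ₁ - τ₂‖ ^ (-δ) * (‖τ₁‖ + ‖τ₂‖) ^ δ := by
    rw [Real.rpow_neg hD.le]
    calc (1:ℝ) = (‖τ₁ - τ₂‖ ^ δ)⁻¹ * ‖τ₁ - τ₂‖ ^ δ := (inv_mul_cancel₀ hδpos.ne').symm
      _ ≤ (‖τ₁ - τ₂‖ ^ δ)⁻¹ * (‖τ₁‖ + ‖τ₂‖) ^ δ :=
          mul_le_mul_of_nonneg_left hδ2 (by positivity)
  have hred : ‖τ₁ - τ₂‖ * (‖τ₁‖ + ‖τ₂‖) ^ (p - 2)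
      ≤ ‖τ₁ - τ₂‖ ^ ((1:ℝ) - δ) * (‖τ₁‖ + ‖τ₂‖) ^ (p - 2 + δ) := by
    rw [e1, e2]
    have hpos : (0:ℝ) ≤ ‖τ₁ - τ₂‖ * (‖τ₁‖ + ‖τ₂‖) ^ (p - 2) := by positivity
    calc ‖τ₁ - τ₂‖ * (‖τ₁‖ + ‖τ₂‖) ^ (p - 2)
        = ‖τ₁ - τ₂‖ * (‖τ₁‖ + ‖τ₂‖) ^ (p - 2) * 1 := by ring
      _ ≤ ‖τ₁ - τ₂‖ * (‖τ₁‖ + ‖τ₂‖) ^ (p - 2)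
          * (‖τ₁ - τ₂‖ ^ (-δ) * (‖τ₁‖ + ‖τ₂‖) ^ δ) :=
          mul_le_mul_of_nonneg_left e3 hpos
      _ = ‖τ₁ - τ₂‖ * ‖τ₁ - τ₂‖ ^ (-δ) * ((‖τ₁‖ + ‖τ₂‖) ^ (p - 2) * (‖τ₁‖ + ‖τ₂‖) ^ δ) := by
          ring
  calc ‖pFlux d p τ₁ - pFlux d p τ₂‖
      ≤ (6 + |p - 2|) * 2 ^ |p - 2| * ‖τ₁ - τ₂‖ * (‖τ₁‖ + ‖τ₂‖) ^ (p - 2) := hmain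
    _ = (6 + |p - 2|) * 2 ^ |p - 2| * (‖τ₁ - τ₂‖ * (‖τ₁‖ + ‖τ₂‖) ^ (p - 2)) := by ring
    _ ≤ (6 + |p - 2|) * 2 ^ |p - 2|
        * (‖τ₁ - τ₂‖ ^ ((1:ℝ) - δ) * (‖τ₁‖ + ‖τ₂‖) ^ (p - 2 + δ)) :=
        mul_le_mul_of_nonneg_left hred hCpos.le
    _ = (6 + |p - 2|) * 2 ^ |p - 2| * ‖τ₁ - τ₂‖ ^ (1 - δ) * (‖τ₁‖ + ‖τ₂‖) ^ (p - 2 + δ) := by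
        ring
end

section
/- Coerciveness estimate for the p-Laplace flux (Barrett–Liu): for every p ∈ (1, ∞) and every δ ≥ 0 there exists a constant C₂ > 0 such that for all τ₁, τ₂ ∈ ℝ^d with τ₁ ≠ τ₂, (A(τ₁) − A(τ₂)) · (τ₁ − τ₂) ≥ C₂ |τ₁ − τ₂|^{2+δ} (|τ₁| + |τ₂|)^{p−2−δ}. -/
open scoped RealInnerProductSpace

section aux

open Real

variable {p : ℝ}

/-- Concavity (Bernoulli) step for `1 < p ≤ 2`. -/
lemma bl_bernoulli (hp : 1 < p) (hp2 : p ≤ 2) {s t : ℝ} (ht : 0 < t) (hts : t ≤ s) :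
    (p - 1) * s ^ (p - 2) * (s - t) ≤ s ^ (p - 1) - t ^ (p - 1) := by
  have hs : 0 < s := ht.trans_le hts
  have hx : (0:ℝ) < t / s := div_pos ht hs
  have hber : (t / s) ^ (p - 1) ≤ 1 + (p - 1) * (t / s - 1) := by
    have h := rpow_one_add_le_one_add_mul_self (s := t / s - 1)
      (by linarith) (by linarith : (0:ℝ) ≤ p - 1) (by linarith)
    simpa using h
  have es : s ^ (p - 1) = s ^ (p - 2) * s := by
    rw [show p - 1 = p - 2 + 1 by ring, Real.rpow_add_one hs.ne']
  have key : t ^ (p - 1) ≤ s ^ (p - 1) - (p - 1) * (s ^ (p - 2) * (s - t)) := by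
    have h1 : t ^ (p - 1) = (t / s) ^ (p - 1) * s ^ (p - 1) := by
      rw [Real.div_rpow ht.le hs.le]
      field_simp
    have h2 : (t / s) ^ (p - 1) * s ^ (p - 1) ≤
        (1 + (p - 1) * (t / s - 1)) * s ^ (p - 1) :=
      mul_le_mul_of_nonneg_right hber (Real.rpow_nonneg hs.le _)
    have h3 : (1 + (p - 1) * (t / s - 1)) * s ^ (p - 1)
        = s ^ (p - 1) - (p - 1) * (s ^ (p - 2) * (s - t)) := by
      rw [es]; field_simp; ring
    linarith [h1 ▸ (h3 ▸ h2)]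
  nlinarith [key]

/-- Endpoint inequality, aligned case. -/
lemma bl_scalar1 (hp : 1 < p) {s t : ℝ} (ht : 0 < t) (hts : t ≤ s) :
    min (p - 1) (2 ^ (1 - p)) * ((s - t) ^ 2 * (s + t) ^ (p - 2)) ≤
      (s - t) * (s ^ (p - 1) - t ^ (p - 1)) := by
  have hs : 0 < s := ht.trans_le hts
  rcases le_or_gt p 2 with hp2 | hp2
  · have hb := bl_bernoulli hp hp2 ht hts
    have hW : (s + t) ^ (p - 2) ≤ s ^ (p - 2) :=
      Real.rpow_le_rpow_of_nonpos hs (by linarith) (by linarith)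
    calc min (p - 1) (2 ^ (1 - p)) * ((s - t) ^ 2 * (s + t) ^ (p - 2))
        ≤ (p - 1) * ((s - t) ^ 2 * s ^ (p - 2)) := by
          apply mul_le_mul (min_le_left _ _)
          · exact mul_le_mul_of_nonneg_left hW (sq_nonneg _)
          · positivity
          · linarith
      _ = (s - t) * ((p - 1) * s ^ (p - 2) * (s - t)) := by ring
      _ ≤ (s - t) * (s ^ (p - 1) - t ^ (p - 1)) :=
          mul_le_mul_of_nonneg_left hb (by linarith)
  · -- p > 2
    have h1 : t ^ (p - 1) ≤ s ^ (p - 2) * t := by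
      have : t ^ (p - 1) = t ^ (p - 2) * t := by
        rw [show p - 1 = p - 2 + 1 by ring, Real.rpow_add_one ht.ne']
      rw [this]
      exact mul_le_mul_of_nonneg_right
        (Real.rpow_le_rpow ht.le hts (by linarith)) ht.le
    have es : s ^ (p - 1) = s ^ (p - 2) * s := by
      rw [show p - 1 = p - 2 + 1 by ring, Real.rpow_add_one hs.ne']
    have h3 : ((s + t) / 2) ^ (p - 2) ≤ s ^ (p - 2) :=
      Real.rpow_le_rpow (by positivity) (by linarith) (by linarith)
    have h4 : ((s + t) / 2) ^ (p - 2) = 2 ^ (2 - p) * (s + t) ^ (p - 2) := by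
      rw [Real.div_rpow (by positivity) (by norm_num),
        show (2:ℝ) ^ (2 - p) = ((2:ℝ) ^ (p - 2))⁻¹ by
          rw [← Real.rpow_neg (by norm_num)]; ring_nf]
      ring
    have h5 : (2:ℝ) ^ (1 - p) ≤ 2 ^ (2 - p) :=
      Real.rpow_le_rpow_of_exponent_le (by norm_num) (by linarith)
    calc min (p - 1) (2 ^ (1 - p)) * ((s - t) ^ 2 * (s + t) ^ (p - 2))
        ≤ 2 ^ (2 - p) * ((s - t) ^ 2 * (s + t) ^ (p - 2)) := by
          apply mul_le_mul_of_nonneg_right ((min_le_right _ _).trans h5)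
          positivity
      _ = (s - t) ^ 2 * (((s + t) / 2) ^ (p - 2)) := by rw [h4]; ring
      _ ≤ (s - t) ^ 2 * s ^ (p - 2) :=
          mul_le_mul_of_nonneg_left h3 (sq_nonneg _)
      _ = (s - t) * (s ^ (p - 2) * s - s ^ (p - 2) * t) := by ring
      _ ≤ (s - t) * (s ^ (p - 1) - t ^ (p - 1)) := by
          apply mul_le_mul_of_nonneg_left _ (by linarith)
          rw [es]; linarith
/-- Second endpoint inequality. -/
lemma bl_scalar2 (hp : 1 < p) {s t : ℝ} (hs : 0 < s) (ht : 0 < t) :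
    min (p - 1) (2 ^ (1 - p)) * (s + t) ^ (p - 1) ≤ s ^ (p - 1) + t ^ (p - 1) := by
  rcases le_or_gt p 2 with hp2 | hp2
  · have hsub : (s + t) ^ (p - 1) ≤ s ^ (p - 1) + t ^ (p - 1) := by
      have h := NNReal.rpow_add_le_add_rpow (s.toNNReal) (t.toNNReal)
        (by linarith : (0:ℝ) ≤ p - 1) (by linarith)
      have hc := NNReal.coe_le_coe.mpr h
      push_cast [NNReal.coe_rpow, Real.coe_toNNReal _ hs.le,
        Real.coe_toNNReal _ ht.le] at hc
      exact hc
    have hC1 : min (p - 1) (2 ^ (1 - p)) ≤ 1 :=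
      (min_le_right _ _).trans
        (Real.rpow_le_one_of_one_le_of_nonpos (by norm_num) (by linarith))
    calc min (p - 1) (2 ^ (1 - p)) * (s + t) ^ (p - 1)
        ≤ 1 * (s + t) ^ (p - 1) :=
          mul_le_mul_of_nonneg_right hC1 (Real.rpow_nonneg (by positivity) _)
      _ = (s + t) ^ (p - 1) := by ring
      _ ≤ s ^ (p - 1) + t ^ (p - 1) := hsub
  · have key : ∀ u v : ℝ, 0 < u → 0 < v → v ≤ u →
        min (p - 1) (2 ^ (1 - p)) * (u + v) ^ (p - 1) ≤ u ^ (p - 1) + v ^ (p - 1) := by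
      intro u v hu hv hvu
      have h4 : ((u + v) / 2) ^ (p - 1) = 2 ^ (1 - p) * (u + v) ^ (p - 1) := by
        rw [Real.div_rpow (by positivity) (by norm_num),
          show (2:ℝ) ^ (1 - p) = ((2:ℝ) ^ (p - 1))⁻¹ by
            rw [← Real.rpow_neg (by norm_num)]; ring_nf]
        ring
      have h3 : ((u + v) / 2) ^ (p - 1) ≤ u ^ (p - 1) :=
        Real.rpow_le_rpow (by positivity) (by linarith) (by linarith)
      calc min (p - 1) (2 ^ (1 - p)) * (u + v) ^ (p - 1)
          ≤ 2 ^ (1 - p) * (u + v) ^ (p - 1) :=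
            mul_le_mul_of_nonneg_right (min_le_right _ _)
              (Real.rpow_nonneg (by positivity) _)
        _ = ((u + v) / 2) ^ (p - 1) := h4.symm
        _ ≤ u ^ (p - 1) := h3
        _ ≤ u ^ (p - 1) + v ^ (p - 1) := by
            have := Real.rpow_nonneg hv.le (p - 1); linarith
    rcases le_total t s with h | h
    · exact key s t hs ht h
    · have := key t s ht hs h
      rw [add_comm t s] at this
      linarith [this]

/-- Key scalar inequality with the inner product as a free parameter. -/
lemma bl_key (hp : 1 < p) {s t r : ℝ} (hs : 0 < s) (ht : 0 < t) (hr : |r| ≤ s * t) :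
    min (p - 1) (2 ^ (1 - p)) * ((s ^ 2 + t ^ 2 - 2 * r) * (s + t) ^ (p - 2)) ≤
      s ^ (p - 2) * s ^ 2 + t ^ (p - 2) * t ^ 2 - (s ^ (p - 2) + t ^ (p - 2)) * r := by
  set C := min (p - 1) (2 ^ (1 - p)) with hCdef
  have hC : 0 < C := lt_min (by linarith) (Real.rpow_pos_of_pos (by norm_num) _)
  obtain ⟨hr1, hr2⟩ := abs_le.mp hr
  have es : s ^ (p - 1) = s ^ (p - 2) * s := by
    rw [show p - 1 = p - 2 + 1 by ring, Real.rpow_add_one hs.ne']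
  have et : t ^ (p - 1) = t ^ (p - 2) * t := by
    rw [show p - 1 = p - 2 + 1 by ring, Real.rpow_add_one ht.ne']
  have eS : (s + t) ^ (p - 1) = (s + t) ^ (p - 2) * (s + t) := by
    rw [show p - 1 = p - 2 + 1 by ring, Real.rpow_add_one (by positivity)]
  have Eplus : C * ((s - t) ^ 2 * (s + t) ^ (p - 2)) ≤
      s ^ (p - 2) * s ^ 2 + t ^ (p - 2) * t ^ 2 - (s ^ (p - 2) + t ^ (p - 2)) * (s * t) := by
    rcases le_total t s with h | h
    · calc C * ((s - t) ^ 2 * (s + t) ^ (p - 2))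
          ≤ (s - t) * (s ^ (p - 1) - t ^ (p - 1)) := bl_scalar1 hp ht h
        _ = _ := by rw [es, et]; ring
    · have h1 := bl_scalar1 hp hs h
      rw [add_comm t s] at h1
      calc C * ((s - t) ^ 2 * (s + t) ^ (p - 2))
          = C * ((t - s) ^ 2 * (s + t) ^ (p - 2)) := by ring
        _ ≤ (t - s) * (t ^ (p - 1) - s ^ (p - 1)) := h1
        _ = _ := by rw [es, et]; ring
  have Eminus : C * ((s + t) ^ 2 * (s + t) ^ (p - 2)) ≤
      s ^ (p - 2) * s ^ 2 + t ^ (p - 2) * t ^ 2 + (s ^ (p - 2) + t ^ (p - 2)) * (s * t) := by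
    calc C * ((s + t) ^ 2 * (s + t) ^ (p - 2))
        = (s + t) * (C * (s + t) ^ (p - 1)) := by rw [eS]; ring
      _ ≤ (s + t) * (s ^ (p - 1) + t ^ (p - 1)) :=
          mul_le_mul_of_nonneg_left (bl_scalar2 hp hs ht) (by positivity)
      _ = _ := by rw [es, et]; ring
  rcases le_total (s ^ (p - 2) + t ^ (p - 2)) (2 * C * (s + t) ^ (p - 2)) with h | h
  · have hprod : 0 ≤ (2 * C * (s + t) ^ (p - 2) - (s ^ (p - 2) + t ^ (p - 2))) * (r + s * t) :=
      mul_nonneg (by linarith) (by linarith)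
    nlinarith [Eminus, hprod]
  · have hprod : 0 ≤ ((s ^ (p - 2) + t ^ (p - 2)) - 2 * C * (s + t) ^ (p - 2)) * (s * t - r) :=
      mul_nonneg (by linarith) (by linarith)
    nlinarith [Eplus, hprod]

end aux

/-- Coerciveness estimate for the p-Laplace flux (Barrett–Liu): for every
`p ∈ (1, ∞)` and `δ ≥ 0` there is `C₂ > 0` such that for all `τ₁ ≠ τ₂` in `ℝ^d`,
`(A(τ₁) − A(τ₂)) · (τ₁ − τ₂) ≥ C₂ |τ₁ − τ₂|^{2+δ} (|τ₁| + |τ₂|)^{p−2−δ}`. -/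
theorem stmt_5 (d : ℕ) (hd : 1 ≤ d) (p : ℝ) (hp : 1 < p) (δ : ℝ) (hδ : 0 ≤ δ) :
    ∃ C₂ > (0 : ℝ), ∀ τ₁ τ₂ : EuclideanSpace ℝ (Fin d), τ₁ ≠ τ₂ →
      C₂ * ‖τ₁ - τ₂‖ ^ (2 + δ) * (‖τ₁‖ + ‖τ₂‖) ^ (p - 2 - δ) ≤
        ⟪pFlux d p τ₁ - pFlux d p τ₂, τ₁ - τ₂⟫ := by
  set C := min (p - 1) ((2:ℝ) ^ (1 - p)) with hCdef
  have hC : 0 < C := lt_min (by linarith) (Real.rpow_pos_of_pos (by norm_num) _)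
  have hC1 : C ≤ 1 :=
    (min_le_right _ _).trans
      (Real.rpow_le_one_of_one_le_of_nonpos (by norm_num) (by linarith))
  refine ⟨C, hC, fun a b hab => ?_⟩
  set s := ‖a‖ with hsdef
  set t := ‖b‖ with htdef
  set D := ‖a - b‖ with hDdef
  have hD : 0 < D := norm_pos_iff.mpr (sub_ne_zero.mpr hab)
  have hDS : D ≤ s + t := norm_sub_le a b
  have hS : 0 < s + t := lt_of_lt_of_le hD hDS
  have step1 : C * D ^ (2 + δ) * (s + t) ^ (p - 2 - δ) ≤
      C * (D ^ 2 * (s + t) ^ (p - 2)) := by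
    have e1 : D ^ (2 + δ) = D ^ (2:ℕ) * D ^ δ := by
      rw [Real.rpow_add hD, Real.rpow_two]
    have e2 : (s + t) ^ (p - 2 - δ) = (s + t) ^ (p - 2) / (s + t) ^ δ :=
      Real.rpow_sub hS _ _
    have h4 : D ^ δ / (s + t) ^ δ ≤ 1 :=
      div_le_one_of_le₀ (Real.rpow_le_rpow hD.le hDS hδ)
        (Real.rpow_nonneg hS.le _)
    calc C * D ^ (2 + δ) * (s + t) ^ (p - 2 - δ)
        = (C * (D ^ 2 * (s + t) ^ (p - 2))) * (D ^ δ / (s + t) ^ δ) := by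
          rw [e1, e2]; ring
      _ ≤ (C * (D ^ 2 * (s + t) ^ (p - 2))) * 1 := by
          apply mul_le_mul_of_nonneg_left h4
          have := Real.rpow_nonneg hS.le (p - 2)
          positivity
      _ = C * (D ^ 2 * (s + t) ^ (p - 2)) := by ring
  refine step1.trans ?_
  rcases eq_or_ne b 0 with rfl | hb
  · have ha : a ≠ 0 := hab
    have hs : 0 < s := norm_pos_iff.mpr ha
    have hinner : ⟪pFlux d p a - pFlux d p 0, a - 0⟫ = s ^ (p - 2) * s ^ 2 := by
      simp only [pFlux, norm_zero, smul_zero, sub_zero, real_inner_smul_left,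
        real_inner_self_eq_norm_sq]
      rfl
    rw [hinner]
    simp only [htdef, norm_zero, add_zero, hDdef, sub_zero]
    calc C * (s ^ 2 * s ^ (p - 2)) ≤ 1 * (s ^ 2 * s ^ (p - 2)) := by
          apply mul_le_mul_of_nonneg_right hC1
          positivity
      _ = s ^ (p - 2) * s ^ 2 := by ring
  rcases eq_or_ne a 0 with rfl | ha
  · have ht : 0 < t := norm_pos_iff.mpr hb
    have hinner : ⟪pFlux d p 0 - pFlux d p b, 0 - b⟫ = t ^ (p - 2) * t ^ 2 := by
      simp only [pFlux, norm_zero, smul_zero, zero_sub, inner_neg_neg,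
        real_inner_smul_left, real_inner_self_eq_norm_sq]
      rfl
    rw [hinner]
    simp only [hsdef, norm_zero, zero_add, hDdef, zero_sub, norm_neg]
    calc C * (t ^ 2 * t ^ (p - 2)) ≤ 1 * (t ^ 2 * t ^ (p - 2)) := by
          apply mul_le_mul_of_nonneg_right hC1
          positivity
      _ = t ^ (p - 2) * t ^ 2 := by ring
  · have hs : 0 < s := norm_pos_iff.mpr ha
    have ht : 0 < t := norm_pos_iff.mpr hb
    have hr : |⟪a, b⟫| ≤ s * t := abs_real_inner_le_norm a b
    have hexp : ⟪pFlux d p a - pFlux d p b, a - b⟫ =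
        s ^ (p - 2) * s ^ 2 + t ^ (p - 2) * t ^ 2 -
          (s ^ (p - 2) + t ^ (p - 2)) * ⟪a, b⟫ := by
      simp only [pFlux, inner_sub_left, inner_sub_right, real_inner_smul_left,
        real_inner_self_eq_norm_sq, real_inner_comm b a]
      ring
    have hD2 : D ^ 2 = s ^ 2 + t ^ 2 - 2 * ⟪a, b⟫ := by
      rw [hDdef, norm_sub_sq_real]; ring
    rw [hexp, hD2]
    exact bl_key hp hs ht hr
end

section
/- Absorption lemma behind the energy estimates: for every p ∈ (1, ∞) and every C > 0 there exists C' > 0 (depending only on p and C) such that for all nonnegative reals x, a, b, if x^p ≤ C (a x^{p−1} + b x + a^p), then x ≤ C' (a + b^{1/(p−1)}). -/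
/-- Absorption lemma: for `p ∈ (1, ∞)` and `C > 0` there is `C' > 0`
(depending only on `p, C`) such that for all nonnegative reals `x, a, b`, if
`x^p ≤ C (a x^{p−1} + b x + a^p)` then `x ≤ C' (a + b^{1/(p−1)})`. -/
theorem stmt_11 (p : ℝ) (hp : 1 < p) (C : ℝ) (hC : 0 < C) :
    ∃ C' > (0 : ℝ), ∀ x a b : ℝ, 0 ≤ x → 0 ≤ a → 0 ≤ b →
      x ^ p ≤ C * (a * x ^ (p - 1) + b * x + a ^ p) →
      x ≤ C' * (a + b ^ (1 / (p - 1))) := by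
  have hp1 : 0 < p - 1 := by linarith
  obtain ⟨r, hrdef⟩ : ∃ r : ℝ, r = min 1 (p - 1) := ⟨_, rfl⟩
  have hr : 0 < r := hrdef ▸ lt_min one_pos hp1
  have hr1 : r ≤ 1 := hrdef ▸ min_le_left _ _
  have hrp : r ≤ p - 1 := hrdef ▸ min_le_right _ _
  have h3C : (0:ℝ) < 3 * C := by linarith
  obtain ⟨K, hKdef⟩ : ∃ K : ℝ, K = max 1 ((3*C) ^ (1/r)) := ⟨_, rfl⟩
  have hK1 : (1:ℝ) ≤ K := hKdef ▸ le_max_left _ _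
  have hK2 : (3*C) ^ (1/r) ≤ K := hKdef ▸ le_max_right _ _
  refine ⟨K, lt_of_lt_of_le one_pos hK1, ?_⟩
  intro x a b hx ha hb hineq
  obtain ⟨M, hMdef⟩ : ∃ M : ℝ, M = a + b ^ (1/(p-1)) := ⟨_, rfl⟩
  rw [← hMdef]
  have hbM : 0 ≤ b ^ (1/(p-1)) := Real.rpow_nonneg hb _
  have hM : 0 ≤ M := by rw [hMdef]; positivity
  rcases eq_or_lt_of_le hM with hM0 | hM0
  · -- M = 0
    have ha0 : a = 0 := by rw [hMdef] at hM0; linarith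
    have hbr0 : b ^ (1/(p-1)) = 0 := by rw [hMdef] at hM0; linarith
    have hb0 : b = 0 :=
      (Real.rpow_eq_zero hb (one_div_ne_zero (ne_of_gt hp1))).mp hbr0
    have hx0 : x = 0 := by
      by_contra h
      have hx' : 0 < x := lt_of_le_of_ne hx (Ne.symm h)
      have hxp : 0 < x ^ p := Real.rpow_pos_of_pos hx' p
      rw [ha0, hb0, Real.zero_rpow (by linarith : p ≠ 0)] at hineq
      have : C * (0 * x ^ (p-1) + 0 * x + 0) = 0 := by ring
      linarith
    rw [hx0]
    have := mul_nonneg (le_trans zero_le_one hK1) hM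
    linarith
  · -- M > 0
    by_cases hxM : x ≤ M
    · have := mul_le_mul_of_nonneg_right hK1 hM
      linarith
    · push_neg at hxM
      have hx0 : 0 < x := hM0.trans hxM
      have hMx : M ≤ x := hxM.le
      have haM : a ≤ M := by rw [hMdef]; linarith
      have hbM' : b ≤ M ^ (p-1) := by
        have h1 : b ^ (1/(p-1)) ≤ M := by rw [hMdef]; linarith
        have h2 : (b ^ (1/(p-1))) ^ (p-1) ≤ M ^ (p-1) :=
          Real.rpow_le_rpow hbM h1 (le_of_lt hp1)
        rwa [← Real.rpow_mul hb, one_div, inv_mul_cancel₀ (ne_of_gt hp1), Real.rpow_one] at h2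
      have haMp : a ^ p ≤ M ^ p := Real.rpow_le_rpow ha haM (by linarith)
      have e1 : M = M ^ r * M ^ (1 - r) := by
        rw [← Real.rpow_add hM0]; ring_nf; rw [Real.rpow_one]
      have e2 : M ^ (1-r) ≤ x ^ (1-r) := Real.rpow_le_rpow hM hMx (by linarith)
      have e3 : x ^ (1-r) * x ^ (p-1) = x ^ (p-r) := by
        rw [← Real.rpow_add hx0]; ring_nf
      have e4 : M ^ (p-1) = M ^ r * M ^ (p-1-r) := by
        rw [← Real.rpow_add hM0]; ring_nf
      have e5 : M ^ (p-1-r) ≤ x ^ (p-1-r) := Real.rpow_le_rpow hM hMx (by linarith)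
      have e6 : x ^ (p-1-r) * x = x ^ (p-r) := by
        nth_rewrite 2 [← Real.rpow_one x]
        rw [← Real.rpow_add hx0]; ring_nf
      have e7 : M ^ p = M ^ r * M ^ (p-r) := by
        rw [← Real.rpow_add hM0]; ring_nf
      have e8 : M ^ (p-r) ≤ x ^ (p-r) := Real.rpow_le_rpow hM hMx (by linarith)
      have e9 : x ^ p = x ^ (p-r) * x ^ r := by
        rw [← Real.rpow_add hx0]; ring_nf
      have hxp1 : 0 ≤ x ^ (p-1) := Real.rpow_nonneg hx _
      have hxpr : 0 < x ^ (p-r) := Real.rpow_pos_of_pos hx0 _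
      have hMr : 0 ≤ M ^ r := Real.rpow_nonneg hM _
      have k1 : a * x ^ (p-1) ≤ M ^ r * x ^ (p-r) := by
        calc a * x ^ (p-1) ≤ M * x ^ (p-1) := mul_le_mul_of_nonneg_right haM hxp1
        _ = M ^ r * (M ^ (1-r) * x ^ (p-1)) := by nth_rewrite 1 [e1]; ring
        _ ≤ M ^ r * (x ^ (1-r) * x ^ (p-1)) := by
            apply mul_le_mul_of_nonneg_left _ hMr
            exact mul_le_mul_of_nonneg_right e2 hxp1
        _ = M ^ r * x ^ (p-r) := by rw [e3]
      have k2 : b * x ≤ M ^ r * x ^ (p-r) := by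
        calc b * x ≤ M ^ (p-1) * x := mul_le_mul_of_nonneg_right hbM' hx
        _ = M ^ r * (M ^ (p-1-r) * x) := by rw [e4]; ring
        _ ≤ M ^ r * (x ^ (p-1-r) * x) := by
            apply mul_le_mul_of_nonneg_left _ hMr
            exact mul_le_mul_of_nonneg_right e5 hx
        _ = M ^ r * x ^ (p-r) := by rw [e6]
      have k3 : a ^ p ≤ M ^ r * x ^ (p-r) := by
        calc a ^ p ≤ M ^ p := haMp
        _ = M ^ r * M ^ (p-r) := e7
        _ ≤ M ^ r * x ^ (p-r) := mul_le_mul_of_nonneg_left e8 hMr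
      have main : x ^ (p-r) * x ^ r ≤ 3 * C * M ^ r * x ^ (p-r) := by
        rw [← e9]
        calc x ^ p ≤ C * (a * x ^ (p-1) + b * x + a ^ p) := hineq
        _ ≤ C * (3 * (M ^ r * x ^ (p-r))) := by
            apply mul_le_mul_of_nonneg_left _ hC.le
            linarith
        _ = 3 * C * M ^ r * x ^ (p-r) := by ring
      have hxr : x ^ r ≤ 3 * C * M ^ r :=
        (mul_le_mul_iff_of_pos_right hxpr).mp (by linarith [main] :
          x ^ r * x ^ (p-r) ≤ (3 * C * M ^ r) * x ^ (p-r))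
      have hfin : x ≤ (3*C) ^ (1/r) * M := by
        have h1 : x = (x ^ r) ^ (1/r) := by
          rw [← Real.rpow_mul hx, mul_one_div, div_self (ne_of_gt hr), Real.rpow_one]
        have h2 : (x ^ r) ^ (1/r) ≤ (3 * C * M ^ r) ^ (1/r) :=
          Real.rpow_le_rpow (Real.rpow_nonneg hx _) hxr (by positivity)
        have h3 : (3 * C * M ^ r) ^ (1/r) = (3*C) ^ (1/r) * M := by
          rw [Real.mul_rpow h3C.le hMr, ← Real.rpow_mul hM,
            mul_one_div, div_self (ne_of_gt hr), Real.rpow_one]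
        rw [h1]; rw [h3] at h2; exact h2
      calc x ≤ (3*C) ^ (1/r) * M := hfin
      _ ≤ K * M := mul_le_mul_of_nonneg_right hK2 hM0.le
end
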